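/- Let K ⊂ ℂ be a number field, let f(z) = ∑_{n≥0} (a_n/n!) z^n be an E-function with all coefficients a_n ∈ K, and let σ : K → ℂ be a field embedding. Then the entire function f^σ(z) = ∑_{n≥0} (σ(a_n)/n!) z^n is also an E-function. -/

import Mathlib

open scoped Nat

namespace EFaux

open FormalMultilinearSeries

/-- Exponential-type bound on a coefficient sequence. -/
def Bdd (b : ℕ → ℂ) : Prop := ∃ C : ℝ, 1 ≤ C ∧ ∀ n, ‖b n‖ ≤ C ^ (n + 1)

/-- The power series with coefficients `b n / n!`. -/
noncomputable def P (b : ℕ → ℂ) : FormalMultilinearSeries ℂ ℂ ℂ :=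
  FormalMultilinearSeries.ofScalars ℂ (fun n => b n / (n ! : ℂ))

/-- The sum of the power series with coefficients `b n / n!`. -/
noncomputable def sB (b : ℕ → ℂ) : ℂ → ℂ := fun z => ∑' n : ℕ, b n / (n ! : ℂ) * z ^ n

lemma bdd_shift {b : ℕ → ℂ} (hb : Bdd b) : Bdd (fun n => b (n + 1)) := by
  obtain ⟨C, hC, h⟩ := hb
  refine ⟨C ^ 2, one_le_pow₀ hC, fun n => ?_⟩
  calc ‖b (n + 1)‖ ≤ C ^ (n + 2) := h (n + 1)
    _ ≤ C ^ (2 * (n + 1)) := pow_le_pow_right₀ hC (by omega)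
    _ = (C ^ 2) ^ (n + 1) := by rw [pow_mul]

lemma bdd_shifti {b : ℕ → ℂ} (hb : Bdd b) (i : ℕ) : Bdd (fun n => b (n + i)) := by
  induction i with
  | zero => simpa using hb
  | succ i ih =>
    have := bdd_shift ih
    simpa [Nat.add_assoc, Nat.add_comm 1 i] using this

lemma summable_norm {b : ℕ → ℂ} (hb : Bdd b) (r : ℝ) (hr : 0 ≤ r) :
    Summable (fun n => ‖b n / (n ! : ℂ)‖ * r ^ n) := by
  obtain ⟨C, hC, h⟩ := hb
  have hC0 : (0 : ℝ) < C := lt_of_lt_of_le one_pos hC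
  have hsum : Summable (fun n : ℕ => C * ((C * r) ^ n / n !)) :=
    (Real.summable_pow_div_factorial (C * r)).mul_left C
  refine Summable.of_nonneg_of_le (fun n => by positivity) (fun n => ?_) hsum
  have h1 : ‖b n / (n ! : ℂ)‖ = ‖b n‖ / n ! := by
    rw [norm_div]
    simp
  rw [h1]
  have h2 : ‖b n‖ / (n ! : ℝ) * r ^ n ≤ C ^ (n + 1) / n ! * r ^ n := by
    apply mul_le_mul_of_nonneg_right _ (by positivity)
    exact div_le_div_of_nonneg_right (h n) (by positivity)
  refine h2.trans (le_of_eq ?_)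
  rw [pow_succ, mul_pow]
  ring

lemma summable_b {b : ℕ → ℂ} (hb : Bdd b) (z : ℂ) :
    Summable (fun n => b n / (n ! : ℂ) * z ^ n) := by
  apply Summable.of_norm
  have := summable_norm hb ‖z‖ (norm_nonneg z)
  refine (this.congr fun n => ?_)
  rw [norm_mul, norm_pow]

lemma hasSum_sB {b : ℕ → ℂ} (hb : Bdd b) (z : ℂ) :
    HasSum (fun n => b n / (n ! : ℂ) * z ^ n) (sB b z) :=
  (summable_b hb z).hasSum

lemma P_apply (b : ℕ → ℂ) (y : ℂ) (n : ℕ) :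
    (P b n fun _ => y) = b n / (n ! : ℂ) * y ^ n := by
  rw [P, FormalMultilinearSeries.ofScalars_apply_eq, smul_eq_mul]

lemma hasFPB {b : ℕ → ℂ} (hb : Bdd b) : HasFPowerSeriesOnBall (sB b) (P b) 0 ⊤ := by
  constructor
  · rw [FormalMultilinearSeries.radius_eq_top_of_summable_norm]
    intro r
    refine (summable_norm hb r r.coe_nonneg).congr fun n => ?_
    rw [P, FormalMultilinearSeries.ofScalars_norm]
  · exact ENNReal.zero_lt_top
  · intro y _
    simp only [zero_add]
    exact (hasSum_sB hb y).congr_fun fun n => P_apply b y n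

lemma sB_coeff_zero {c : ℕ → ℂ} (h : ∀ z : ℂ, HasSum (fun n => c n / (n ! : ℂ) * z ^ n) 0) :
    ∀ n, c n = 0 := by
  -- the terms at z = 2 are bounded
  have h2 : Summable (fun n => c n / (n ! : ℂ) * (2 : ℂ) ^ n) := (h 2).summable
  have htend : Filter.Tendsto (fun n => ‖c n / (n ! : ℂ) * (2 : ℂ) ^ n‖) Filter.atTop (nhds 0) := by
    simpa using h2.tendsto_atTop_zero.norm
  obtain ⟨M, hM⟩ := htend.bddAbove_range
  have hMle : ∀ n : ℕ, ‖c n / (n ! : ℂ)‖ ≤ M := by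
    intro n
    have h1 : ‖c n / (n ! : ℂ) * (2 : ℂ) ^ n‖ ≤ M := hM ⟨n, rfl⟩
    have h3 : ‖c n / (n ! : ℂ)‖ ≤ ‖c n / (n ! : ℂ) * (2 : ℂ) ^ n‖ := by
      rw [norm_mul, norm_pow]
      have h5 : (1 : ℝ) ≤ ‖(2 : ℂ)‖ ^ n := one_le_pow₀ (by norm_num)
      nlinarith [norm_nonneg (c n / (n ! : ℂ))]
    linarith
  have hrad : (1 : ENNReal) ≤ (P c).radius := by
    apply FormalMultilinearSeries.le_radius_of_bound _ M
    intro n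
    rw [P, FormalMultilinearSeries.ofScalars_norm]
    simpa using hMle n
  have hball : HasFPowerSeriesOnBall (fun _ : ℂ => (0 : ℂ)) (P c) 0 1 :=
    ⟨hrad, one_pos, fun {y} _ => by
      simpa only [zero_add] using (h y).congr_fun fun n => P_apply c y n⟩
  have hP0 : P c = 0 := hball.hasFPowerSeriesAt.eq_zero
  intro n
  have : (P c) n = 0 := by rw [hP0]; rfl
  rw [P] at this
  have h4 := (FormalMultilinearSeries.ofScalars_eq_zero (c := fun n => c n / (n ! : ℂ)) ℂ n).mp this
  field_simp at h4
  exact (div_eq_zero_iff.mp h4).resolve_right (by exact_mod_cast Nat.factorial_ne_zero n)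

lemma analyticOnNhd_sB {b : ℕ → ℂ} (hb : Bdd b) : AnalyticOnNhd ℂ (sB b) Set.univ :=
  fun _ _ => (hasFPB hb).analyticAt_of_mem (by simp)

lemma continuous_sB {b : ℕ → ℂ} (hb : Bdd b) : Continuous (sB b) :=
  continuous_iff_continuousAt.mpr fun z => ((analyticOnNhd_sB hb) z trivial).continuousAt

lemma deriv_sB {b : ℕ → ℂ} (hb : Bdd b) : deriv (sB b) = sB (fun n => b (n + 1)) := by
  have h := hasFPB hb
  have hd := h.fderiv
  have hshift := bdd_shift hb
  have key : ∀ z : ℂ, z ≠ 0 → deriv (sB b) z = sB (fun n => b (n + 1)) z := by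
    intro z hz
    have hs : HasSum (fun n => (P b).derivSeries n (fun _ => z)) (fderiv ℂ (sB b) z) := by
      have h1 := hd.hasSum (y := z) (by simp)
      simpa using h1
    have hs2 : HasSum (fun n => (P b).derivSeries n (fun _ => z) z) (fderiv ℂ (sB b) z z) :=
      hs.mapL (ContinuousLinearMap.apply ℂ ℂ z)
    have hterm : ∀ n : ℕ, (P b).derivSeries n (fun _ => z) z
        = z * (b (n + 1) / (n ! : ℂ) * z ^ n) := by
      intro n
      rw [FormalMultilinearSeries.derivSeries_apply_diag, P_apply]
      have hfac : ((n + 1)! : ℂ) = (n + 1 : ℕ) * (n ! : ℂ) := by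
        push_cast [Nat.factorial_succ]
        ring
      have h2 : (n ! : ℂ) ≠ 0 := by exact_mod_cast Nat.factorial_ne_zero n
      have h1 : ((n : ℂ) + 1) ≠ 0 := Nat.cast_add_one_ne_zero n
      rw [nsmul_eq_mul, hfac]
      push_cast
      field_simp
      ring
    have hval : fderiv ℂ (sB b) z z = z * deriv (sB b) z := by
      have h1 : z = z • (1 : ℂ) := by simp
      conv_lhs => rw [h1]
      rw [ContinuousLinearMap.map_smul]
      simp [fderiv_apply_one_eq_deriv, smul_eq_mul]
    rw [hval] at hs2
    have hs3 : HasSum (fun n => z * (b (n + 1) / (n ! : ℂ) * z ^ n)) (z * deriv (sB b) z) := by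
      refine hs2.congr_fun fun n => ?_
      rw [hterm n]
    have hs4 : HasSum (fun n => b (n + 1) / (n ! : ℂ) * z ^ n) (deriv (sB b) z) :=
      (hasSum_mul_left_iff hz).mp hs3
    exact hs4.unique (hasSum_sB hshift z)
  have hc1 : Continuous (deriv (sB b)) := by
    have h1 : AnalyticOnNhd ℂ (deriv (sB b)) Set.univ := (analyticOnNhd_sB hb).deriv
    exact continuous_iff_continuousAt.mpr fun z => (h1 z trivial).continuousAt
  exact Continuous.ext_on (dense_compl_singleton (0 : ℂ)) hc1 (continuous_sB hshift)
    fun z hz => key z hz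

lemma iteratedDeriv_sB {b : ℕ → ℂ} (hb : Bdd b) (i : ℕ) :
    iteratedDeriv i (sB b) = sB (fun n => b (n + i)) := by
  induction i generalizing b with
  | zero => simp [iteratedDeriv_zero]
  | succ i ih =>
    rw [iteratedDeriv_succ', deriv_sB hb, ih (bdd_shift hb)]
    rfl

/-- The Taylor coefficients (times `n!`) of `∑ i ≤ μ, p i (z) * f⁽ⁱ⁾(z)`. -/
noncomputable def cSeq (b : ℕ → ℂ) (p : ℕ → Polynomial ℂ) (μ N : ℕ) (n : ℕ) : ℂ :=
  ∑ i ∈ Finset.range (μ + 1), ∑ k ∈ Finset.range (N + 1),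
    if k ≤ n then (p i).coeff k * (n.descFactorial k : ℂ) * b (n - k + i) else 0

lemma combo {b : ℕ → ℂ} (hb : Bdd b) (μ N : ℕ) (p : ℕ → Polynomial ℂ)
    (hdeg : ∀ i, i ≤ μ → (p i).natDegree ≤ N) (z : ℂ) :
    HasSum (fun n => cSeq b p μ N n / (n ! : ℂ) * z ^ n)
      (∑ i ∈ Finset.range (μ + 1), (p i).eval z * iteratedDeriv i (sB b) z) := by
  classical
  -- the elementary summands
  set t : ℕ → ℕ → ℕ → ℂ := fun i k n =>
    if k ≤ n then (p i).coeff k * (b (n - k + i) / ((n - k)! : ℂ) * z ^ n) else 0 with ht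
  have key : ∀ i k : ℕ,
      HasSum (t i k) ((p i).coeff k * (z ^ k * sB (fun m => b (m + i)) z)) := by
    intro i k
    have base := hasSum_sB (bdd_shifti hb i) z
    have h1 : HasSum (fun n => z ^ k * (b (n + i) / (n ! : ℂ) * z ^ n))
        (z ^ k * sB (fun m => b (m + i)) z) := base.mul_left _
    set u : ℕ → ℂ := fun n => if k ≤ n then b (n - k + i) / ((n - k)! : ℂ) * z ^ n else 0 with hu
    have h2 : (fun n => u (n + k)) = fun n => z ^ k * (b (n + i) / (n ! : ℂ) * z ^ n) := by
      funext n
      have hc : k ≤ n + k := Nat.le_add_left k n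
      simp only [hu, if_pos hc, Nat.add_sub_cancel]
      rw [pow_add]
      ring
    rw [← h2] at h1
    have h3 := (hasSum_nat_add_iff k).mp h1
    have h4 : ∑ j ∈ Finset.range k, u j = 0 := by
      apply Finset.sum_eq_zero
      intro j hj
      have hj' : ¬ k ≤ j := by
        simp only [Finset.mem_range] at hj
        omega
      simp [hu, hj']
    rw [h4, add_zero] at h3
    have h5 := h3.mul_left ((p i).coeff k)
    refine h5.congr_fun fun n => ?_
    simp only [ht, hu, mul_ite, mul_zero]
  have keyi : ∀ i ∈ Finset.range (μ + 1),
      HasSum (fun n => ∑ k ∈ Finset.range (N + 1), t i k n)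
        ((p i).eval z * iteratedDeriv i (sB b) z) := by
    intro i hi
    have hiμ : i ≤ μ := by
      simp only [Finset.mem_range] at hi
      omega
    have h1 := hasSum_sum (f := fun k => t i k)
      (a := fun k => (p i).coeff k * (z ^ k * sB (fun m => b (m + i)) z))
      (fun k _ => key i k) (s := Finset.range (N + 1))
    have h2 : ∑ k ∈ Finset.range (N + 1), (p i).coeff k * (z ^ k * sB (fun m => b (m + i)) z)
        = (p i).eval z * iteratedDeriv i (sB b) z := by
      rw [iteratedDeriv_sB hb i,
        Polynomial.eval_eq_sum_range' (Nat.lt_succ_of_le (hdeg i hiμ)), Finset.sum_mul]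
      apply Finset.sum_congr rfl
      intro k _
      ring
    rwa [h2] at h1
  have H := hasSum_sum keyi
  refine H.congr_fun fun n => ?_
  rw [cSeq, Finset.sum_div, Finset.sum_mul]
  apply Finset.sum_congr rfl
  intro i _
  rw [Finset.sum_div, Finset.sum_mul]
  apply Finset.sum_congr rfl
  intro k _
  simp only [ht]
  by_cases hkn : k ≤ n
  · simp only [if_pos hkn]
    have hfac : (n ! : ℂ) = ((n - k)! : ℂ) * (n.descFactorial k : ℂ) := by
      exact_mod_cast (Nat.factorial_mul_descFactorial hkn).symm
    have hd0 : (n.descFactorial k : ℂ) ≠ 0 := by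
      have : n.descFactorial k ≠ 0 := by
        simp only [ne_eq, Nat.descFactorial_eq_zero_iff_lt]
        omega
      exact_mod_cast this
    have hf0 : ((n - k)! : ℂ) ≠ 0 := by
      exact_mod_cast Nat.factorial_ne_zero (n - k)
    rw [hfac]
    field_simp
  · simp [if_neg hkn]

/-- Any embedding of a subfield of the algebraic numbers into `ℂ` extends to the whole
ring of algebraic numbers. -/
lemma exists_tau (F : Type*) [Field F] [Algebra ℚ F] (σ ι : F →+* ℂ)
    (hFalg : ∀ x : F, IsIntegral ℚ (ι x)) :
    ∃ τr : (integralClosure ℚ ℂ) →+* ℂ,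
      ∀ (y : integralClosure ℚ ℂ) (x : F), (y : ℂ) = ι x → τr y = σ x := by
  set A := integralClosure ℚ ℂ with hA
  have hmem : ∀ x : F, ι x ∈ A := fun x => hFalg x
  let ιA : F →+* A := {
    toFun := fun x => ⟨ι x, hmem x⟩
    map_one' := by ext; simp
    map_mul' := fun x y => by ext; simp
    map_zero' := by ext; simp
    map_add' := fun x y => by ext; simp }
  letI : Algebra F ℂ := σ.toAlgebra
  letI : Algebra F A := ιA.toAlgebra
  haveI tow1 : IsScalarTower ℚ F A :=
    IsScalarTower.of_algebraMap_eq' (RingHom.ext_rat _ _)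
  haveI : Module.IsTorsionFree F A := by
    apply Module.isTorsionFree_iff_algebraMap_injective.mpr
    intro x y hxy
    apply ι.injective
    exact congrArg (fun t : A => (t : ℂ)) hxy
  haveI : Module.IsTorsionFree F ℂ :=
    Module.isTorsionFree_iff_algebraMap_injective.mpr σ.injective
  haveI : Algebra.IsAlgebraic F A := by
    constructor
    intro x
    have hx : IsIntegral ℚ x := by
      rw [← isIntegral_algebraMap_iff (B := ℂ)
        (Subtype.val_injective (p := fun c => c ∈ A))]
      exact x.2
    exact (hx.tower_top (A := F)).isAlgebraic
  let τ : A →ₐ[F] ℂ := IsAlgClosed.lift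
  refine ⟨τ.toRingHom, fun y x hyx => ?_⟩
  have hy : y = ιA x := Subtype.ext hyx
  rw [hy]
  exact τ.commutes x

end EFaux

open scoped Nat

/-- `IsEFunction a f` : `f` is the E-function with Taylor coefficients `a n / n!`. -/
structure IsEFunction (a : ℕ → ℂ) (f : ℂ → ℂ) : Prop where
  hasSum : ∀ z : ℂ, HasSum (fun n : ℕ => a n / (n ! : ℂ) * z ^ n) (f z)
  coeff_alg : ∀ n, IsAlgebraic ℚ (a n)
  holonomic : ∃ (μ : ℕ) (p : ℕ → Polynomial ℂ),
    (∃ i, i ≤ μ ∧ p i ≠ 0) ∧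
    (∀ i, i ≤ μ → ∀ k, IsAlgebraic ℚ ((p i).coeff k)) ∧
    (∀ z : ℂ, ∑ i ∈ Finset.range (μ + 1), (p i).eval z * iteratedDeriv i f z = 0)
  conj_bound : ∃ C : ℝ, 1 ≤ C ∧ ∀ n : ℕ, ∀ x : ℂ,
    (Polynomial.aeval x) (minpoly ℚ (a n)) = 0 → ‖x‖ ≤ C ^ (n + 1)
  denom : ∃ C : ℝ, 1 ≤ C ∧ ∃ d : ℕ → ℕ,
    (∀ n, 0 < d n) ∧ (∀ n, (d n : ℝ) ≤ C ^ (n + 1)) ∧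
    ∀ n m : ℕ, m ≤ n → IsIntegral ℤ ((d n : ℂ) * a m)

set_option maxHeartbeats 2000000 in
set_option synthInstance.maxHeartbeats 200000 in
theorem conjugate_is_EFunction
    (K : Subfield ℂ) [FiniteDimensional ℚ K]
    (a : ℕ → K) (f : ℂ → ℂ)
    (hE : IsEFunction (fun n => (a n : ℂ)) f)
    (σ : K →+* ℂ) :
    ∃ g : ℂ → ℂ, IsEFunction (fun n => σ (a n)) g := by
  classical
  obtain ⟨C, hC1, hCb⟩ := hE.conj_bound
  set b : ℕ → ℂ := fun n => (a n : ℂ) with hbdef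
  have hbint : ∀ n, IsIntegral ℚ (b n) := fun n => (hE.coeff_alg n).isIntegral
  have hbB : EFaux.Bdd b := ⟨C, hC1, fun n => hCb n _ (minpoly.aeval ℚ _)⟩
  -- the ring of algebraic numbers
  set A := integralClosure ℚ ℂ with hA
  have hKint : ∀ x : K, IsIntegral ℚ ((x : ℂ)) := by
    intro x
    have h1 : IsIntegral ℚ x := IsIntegral.of_finite ℚ x
    have h2 := h1.map (K.subtype.toRatAlgHom)
    simpa using h2
  let inclQ : K →ₐ[ℚ] A := (K.subtype.toRatAlgHom).codRestrict A (fun x => hKint x)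
  have hinclQ : ∀ x : K, ((inclQ x : ℂ)) = (x : ℂ) := fun x => rfl
  obtain ⟨τr, hτr⟩ := EFaux.exists_tau K σ K.subtype (fun x => hKint x)
  have hτσ : ∀ x : K, τr (inclQ x) = σ x := fun x => hτr _ x rfl
  have hcomp : τr.comp (algebraMap ℚ A) = algebraMap ℚ ℂ := RingHom.ext_rat _ _
  have tau_aeval : ∀ (x : A) (m : Polynomial ℚ),
      Polynomial.aeval ((x : ℂ)) m = 0 → Polynomial.aeval (τr x) m = 0 := by
    intro x m hm
    have h1 : Polynomial.aeval x m = 0 := by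
      apply Subtype.ext
      have h2 := Polynomial.aeval_algHom_apply A.val x m
      show A.val ((Polynomial.aeval x) m) = A.val 0
      rw [← h2, map_zero]
      exact hm
    have h3 : Polynomial.aeval (τr x) m = τr (Polynomial.aeval x m) := by
      rw [Polynomial.aeval_def, Polynomial.aeval_def, Polynomial.hom_eval₂, hcomp]
    rw [h3, h1, map_zero]
  have tau_alg : ∀ x : A, IsAlgebraic ℚ (τr x) := fun x =>
    ⟨minpoly ℚ ((x : ℂ)), minpoly.ne_zero x.2, tau_aeval x _ (minpoly.aeval ℚ _)⟩
  have tau_ne : ∀ x : A, x ≠ 0 → τr x ≠ 0 := by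
    intro x hx
    have hxc : ((x : ℂ)) ≠ 0 := fun h => hx (Subtype.ext h)
    have hinv : IsIntegral ℚ (((x : ℂ))⁻¹) :=
      ((x.2 : IsIntegral ℚ ((x : ℂ))).isAlgebraic.inv).isIntegral
    have hxy : x * ⟨((x : ℂ))⁻¹, hinv⟩ = 1 := Subtype.ext (mul_inv_cancel₀ hxc)
    have h3 := congrArg τr hxy
    rw [map_mul, map_one] at h3
    exact left_ne_zero_of_mul_eq_one h3
  -- the elements a n in A, and facts about σ (a n)
  have hσa : ∀ n, σ (a n) = τr (inclQ (a n)) := fun n => (hτσ (a n)).symm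
  have aevalσ : ∀ n, Polynomial.aeval (σ (a n)) (minpoly ℚ (b n)) = 0 := by
    intro n
    rw [hσa]
    exact tau_aeval _ _ (by rw [hinclQ]; exact minpoly.aeval ℚ (b n))
  have hσB : EFaux.Bdd (fun n => σ (a n)) := ⟨C, hC1, fun n => hCb n _ (aevalσ n)⟩
  have minpoly_eq : ∀ n, minpoly ℚ (σ (a n)) = minpoly ℚ (b n) := fun n =>
    (minpoly.eq_of_irreducible_of_monic (minpoly.irreducible (hbint n)) (aevalσ n)
      (minpoly.monic (hbint n))).symm
  refine ⟨EFaux.sB (fun n => σ (a n)), ?_, ?_, ?_, ?_, ?_⟩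
  · exact fun z => EFaux.hasSum_sB hσB z
  · intro n
    rw [hσa]
    exact tau_alg _
  · -- holonomic
    obtain ⟨μ, p, ⟨i0, hi0, hp0⟩, halg, hODE⟩ := hE.holonomic
    set N := (Finset.range (μ + 1)).sup (fun i => (p i).natDegree) with hN
    have hdeg : ∀ i, i ≤ μ → (p i).natDegree ≤ N := by
      intro i hi
      rw [hN]
      apply Finset.le_sup (f := fun j => (p j).natDegree)
      rw [Finset.mem_range]
      omega
    have hfeq : f = EFaux.sB b := funext fun z => (hE.hasSum z).unique (EFaux.hasSum_sB hbB z)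
    have hODE' : ∀ z : ℂ, ∑ i ∈ Finset.range (μ + 1),
        (p i).eval z * iteratedDeriv i (EFaux.sB b) z = 0 := by
      intro z
      rw [← hfeq]
      exact hODE z
    have hczero : ∀ n, EFaux.cSeq b p μ N n = 0 := by
      apply EFaux.sB_coeff_zero
      intro z
      have h1 := EFaux.combo hbB μ N p hdeg z
      rwa [hODE' z] at h1
    -- algebraic lifts of the coefficients of p
    set pA : ℕ → ℕ → A := fun i k =>
      if h : IsAlgebraic ℚ ((p i).coeff k) then ⟨(p i).coeff k, h.isIntegral⟩ else 0 with hpA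
    have hpAcoe : ∀ i k, i ≤ μ → ((pA i k : ℂ)) = (p i).coeff k := by
      intro i k hi
      rw [hpA]
      simp only [dif_pos (halg i hi k)]
    set cA : ℕ → A := fun n => ∑ i ∈ Finset.range (μ + 1), ∑ k ∈ Finset.range (N + 1),
      if k ≤ n then pA i k * (n.descFactorial k : A) * inclQ (a (n - k + i)) else 0 with hcA
    have hcAcoe : ∀ n, ((cA n : ℂ)) = EFaux.cSeq b p μ N n := by
      intro n
      rw [hcA]
      unfold EFaux.cSeq
      push_cast
      apply Finset.sum_congr rfl
      intro i hi
      have hiμ : i ≤ μ := by simp only [Finset.mem_range] at hi; omega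
      apply Finset.sum_congr rfl
      intro k _
      rw [apply_ite (fun t : A => (t : ℂ))]
      push_cast
      rw [hpAcoe i k hiμ, hinclQ]
    have hcA0 : ∀ n, cA n = 0 := by
      intro n
      apply Subtype.ext
      rw [hcAcoe n, hczero n]
      rfl
    -- the conjugated polynomials
    set q : ℕ → Polynomial ℂ := fun i =>
      ∑ k ∈ Finset.range (N + 1), Polynomial.monomial k (τr (pA i k)) with hq
    have hqcoeff : ∀ i k, (q i).coeff k =
        if k ∈ Finset.range (N + 1) then τr (pA i k) else 0 := by
      intro i k
      rw [hq]
      simp only [Polynomial.finset_sum_coeff, Polynomial.coeff_monomial]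
      rw [Finset.sum_ite_eq' (Finset.range (N + 1)) k (fun k' => τr (pA i k'))]
    have hqdeg : ∀ i, i ≤ μ → (q i).natDegree ≤ N := by
      intro i _
      apply Polynomial.natDegree_le_iff_coeff_eq_zero.mpr
      intro m hm
      rw [hqcoeff]
      simp only [Finset.mem_range]
      rw [if_neg (by omega)]
    have hτc : ∀ n, EFaux.cSeq (fun m => σ (a m)) q μ N n = τr (cA n) := by
      intro n
      rw [hcA]
      unfold EFaux.cSeq
      rw [map_sum]
      apply Finset.sum_congr rfl
      intro i _
      rw [map_sum]
      apply Finset.sum_congr rfl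
      intro k hk
      rw [apply_ite τr, map_zero, map_mul, map_mul, map_natCast, hqcoeff, if_pos hk]
      simp only [← hσa]
    have hc'0 : ∀ n, EFaux.cSeq (fun n => σ (a n)) q μ N n = 0 := by
      intro n
      rw [hτc n, hcA0 n, map_zero]
    refine ⟨μ, q, ⟨i0, hi0, ?_⟩, ?_, ?_⟩
    · -- q i0 ≠ 0
      set k0 := (p i0).natDegree with hk0
      have hk0N : k0 ≤ N := hdeg i0 hi0
      have hco : (p i0).coeff k0 ≠ 0 := by
        rw [hk0]
        exact Polynomial.leadingCoeff_ne_zero.mpr hp0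
      have hpA0 : pA i0 k0 ≠ 0 := by
        intro h
        apply hco
        have := hpAcoe i0 k0 hi0
        rw [h] at this
        simpa using this.symm
      have hq0 : (q i0).coeff k0 ≠ 0 := by
        rw [hqcoeff, if_pos (by simp only [Finset.mem_range]; omega)]
        exact tau_ne _ hpA0
      intro h
      apply hq0
      rw [h]
      simp
    · -- algebraic coefficients
      intro i hi k
      by_cases hk : k ∈ Finset.range (N + 1)
      · rw [hqcoeff, if_pos hk]
        exact tau_alg _
      · rw [hqcoeff, if_neg hk]
        exact isAlgebraic_zero
    · -- the ODE for g
      intro z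
      have hcombo := EFaux.combo hσB μ N q hqdeg z
      have h0 : (fun n => EFaux.cSeq (fun n => σ (a n)) q μ N n / (n ! : ℂ) * z ^ n)
          = fun _ => (0 : ℂ) := by
        funext n
        rw [hc'0 n]
        simp
      rw [h0] at hcombo
      exact hcombo.unique hasSum_zero
  · -- conj_bound
    exact ⟨C, hC1, fun n x hx => hCb n x (by rwa [minpoly_eq n] at hx)⟩
  · -- denom
    obtain ⟨C₂, hC₂1, d, hd1, hd2, hd3⟩ := hE.denom
    refine ⟨C₂, hC₂1, d, hd1, hd2, ?_⟩
    intro n m hmn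
    haveI : IsScalarTower ℤ A ℂ := IsScalarTower.of_algebraMap_eq' (RingHom.ext_int _ _)
    have hwcoe : (algebraMap A ℂ) ((d n : A) * inclQ (a m)) = (d n : ℂ) * b m := by
      rw [map_mul, map_natCast]
      congr 1
    have hw : IsIntegral ℤ ((d n : A) * inclQ (a m)) := by
      rw [← isIntegral_algebraMap_iff (B := ℂ)
        (Subtype.val_injective (p := fun c => c ∈ A))]
      rw [hwcoe]
      exact hd3 n m hmn
    have h2 := hw.map τr.toIntAlgHom
    have h3 : τr ((d n : A) * inclQ (a m)) = (d n : ℂ) * σ (a m) := by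
      rw [map_mul, map_natCast, hτσ]
    rw [RingHom.toIntAlgHom_apply, h3] at h2
    exact h2
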